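/- arXiv:2106.15775 — 3 statements merged into one kernel-verified Lean document; each statement's English description precedes it below -/
import Mathlib

section
/- Let H be a Hilbert space and A_i, B_i ∈ L(H;H) for i = 1,…,n. Assume each A_i is positive definite, B_1 is positive definite, and B_i is positive semi-definite for i ≥ 2. Then the operator norm of (∑_i B_i^{1/2} A_i B_i^{1/2})^{-1/2} (∑_i B_i) (∑_i B_i^{1/2} A_i B_i^{1/2})^{-1/2} is at most max_i ‖A_i^{-1}‖. -/
open scoped RealInnerProductSpace

private lemma cs_aux {H : Type*} [NormedAddCommGroup H] [InnerProductSpace ℝ H]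
    (T : H →L[ℝ] H) (hsym : ∀ x y : H, ⟪T x, y⟫ = ⟪x, T y⟫)
    (hpos : ∀ x : H, 0 ≤ ⟪T x, x⟫) (x y : H) :
    ⟪T x, y⟫ ^ 2 ≤ ⟪T x, x⟫ * ⟪T y, y⟫ := by
  have key : ∀ t : ℝ, 0 ≤ ⟪T y, y⟫ * (t * t) + (2 * ⟪T x, y⟫) * t + ⟪T x, x⟫ := by
    intro t
    have h := hpos (x + t • y)
    have hyx : ⟪T y, x⟫ = ⟪T x, y⟫ := by
      rw [hsym y x, real_inner_comm]
    have hexp : ⟪T (x + t • y), x + t • y⟫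
        = ⟪T y, y⟫ * (t * t) + (2 * ⟪T x, y⟫) * t + ⟪T x, x⟫ := by
      simp only [map_add, map_smul, inner_add_left, inner_add_right,
        real_inner_smul_left, real_inner_smul_right]
      rw [hyx]; ring
    linarith [hexp ▸ h]
  have hd := discrim_le_zero (a := ⟪T y, y⟫) (b := 2 * ⟪T x, y⟫) (c := ⟪T x, x⟫) key
  rw [discrim] at hd
  nlinarith [hd]

private lemma norm_le_of_inner {H : Type*} [NormedAddCommGroup H] [InnerProductSpace ℝ H]
    (T : H →L[ℝ] H) (M : ℝ) (hsym : ∀ x y : H, ⟪T x, y⟫ = ⟪x, T y⟫)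
    (hpos : ∀ x : H, 0 ≤ ⟪T x, x⟫) (hM : 0 ≤ M)
    (hb : ∀ x : H, ⟪T x, x⟫ ≤ M * ‖x‖ ^ 2) : ‖T‖ ≤ M := by
  refine ContinuousLinearMap.opNorm_le_bound _ hM fun x => ?_
  have h1 := cs_aux T hsym hpos x (T x)
  have e1 : ⟪T x, T x⟫ = ‖T x‖ ^ 2 := real_inner_self_eq_norm_sq _
  have h2 : ⟪T x, x⟫ ≤ M * ‖x‖ ^ 2 := hb x
  have h3 : ⟪T (T x), T x⟫ ≤ M * ‖T x‖ ^ 2 := hb _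
  have h0 : 0 ≤ ⟪T x, x⟫ := hpos x
  have h0' : 0 ≤ ⟪T (T x), T x⟫ := hpos _
  rcases eq_or_lt_of_le (norm_nonneg (T x)) with hz | hz
  · rw [← hz]; positivity
  · have key : ‖T x‖ ^ 4 ≤ (M * ‖x‖ ^ 2) * (M * ‖T x‖ ^ 2) := by
      nlinarith
    have k2 : ‖T x‖ ^ 2 ≤ (M * ‖x‖) ^ 2 := by nlinarith [mul_pos hz hz]
    have := (pow_le_pow_iff_left₀ (le_of_lt hz) (mul_nonneg hM (norm_nonneg x)) two_ne_zero).mp k2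
    linarith

private lemma inv_bound {H : Type*} [NormedAddCommGroup H] [InnerProductSpace ℝ H]
    (A Ainv : H →L[ℝ] H) (hsym : ∀ x y : H, ⟪A x, y⟫ = ⟪x, A y⟫)
    (hpos : ∀ x : H, 0 ≤ ⟪A x, x⟫) (h : A.comp Ainv = 1) (y : H) :
    ‖y‖ ^ 2 ≤ ‖Ainv‖ * ⟪A y, y⟫ := by
  have e : A (Ainv y) = y := by
    have := ContinuousLinearMap.ext_iff.mp h y
    simpa using this
  have h1 := cs_aux A hsym hpos (Ainv y) y
  rw [e] at h1
  -- h1 : ⟪y,y⟫^2 ≤ ⟪y, Ainv y⟫ * ⟪A y, y⟫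
  have h2 : ⟪y, Ainv y⟫ ≤ ‖Ainv‖ * ‖y‖ ^ 2 := by
    calc ⟪y, Ainv y⟫ ≤ ‖y‖ * ‖Ainv y‖ := real_inner_le_norm _ _
    _ ≤ ‖y‖ * (‖Ainv‖ * ‖y‖) := by
        exact mul_le_mul_of_nonneg_left (Ainv.le_opNorm y) (norm_nonneg y)
    _ = ‖Ainv‖ * ‖y‖ ^ 2 := by ring
  rw [real_inner_self_eq_norm_sq] at h1
  rcases eq_or_lt_of_le (norm_nonneg y) with hz | hz
  · rw [← hz]
    have : 0 ≤ ‖Ainv‖ * ⟪A y, y⟫ := mul_nonneg (norm_nonneg _) (hpos y)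
    simpa using this
  · nlinarith [hpos y, norm_nonneg (Ainv : H →L[ℝ] H), mul_pos hz hz]

/-- Operator lemma (general form). -/
theorem stmt0
    {H : Type*} [NormedAddCommGroup H] [InnerProductSpace ℝ H] [CompleteSpace H]
    {n : ℕ} (hn : 0 < n)
    (A B sqB Ainv : Fin n → (H →L[ℝ] H)) (R : H →L[ℝ] H)
    -- each A i is positive definite
    (hAsa : ∀ i, IsSelfAdjoint (A i))
    (hApd : ∀ i, ∃ c > 0, ∀ x : H, c * ‖x‖ ^ 2 ≤ ⟪A i x, x⟫)
    -- B 1 (the first one) is positive definite, the others positive semi-definite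
    (hBsa : ∀ i, IsSelfAdjoint (B i))
    (hBpd : ∃ c > 0, ∀ x : H, c * ‖x‖ ^ 2 ≤ ⟪B ⟨0, hn⟩ x, x⟫)
    (hBpsd : ∀ i, ∀ x : H, 0 ≤ ⟪B i x, x⟫)
    -- sqB i is the positive square root of B i
    (hsqBsa : ∀ i, IsSelfAdjoint (sqB i))
    (hsqBpsd : ∀ i, ∀ x : H, 0 ≤ ⟪sqB i x, x⟫)
    (hsqB : ∀ i, (sqB i).comp (sqB i) = B i)
    -- Ainv i is the (bounded) inverse of A i
    (hAinv : ∀ i, (Ainv i).comp (A i) = 1 ∧ (A i).comp (Ainv i) = 1)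
    -- R is the inverse of the positive square root of ∑ i, B i^{1/2} A i B i^{1/2}
    (hRsa : IsSelfAdjoint R)
    (hRpsd : ∀ x : H, 0 ≤ ⟪R x, x⟫)
    (hR : R.comp ((∑ i, (sqB i).comp ((A i).comp (sqB i))).comp R) = 1) :
    ‖R.comp ((∑ i, B i).comp R)‖ ≤
      Finset.univ.sup' ⟨⟨0, hn⟩, Finset.mem_univ _⟩ (fun i => ‖Ainv i‖) := by
  set M := Finset.univ.sup' ⟨⟨0, hn⟩, Finset.mem_univ _⟩ (fun i => ‖Ainv i‖) with hMdef
  have hMi : ∀ i, ‖Ainv i‖ ≤ M := fun i => Finset.le_sup' (fun j => ‖Ainv j‖) (Finset.mem_univ i)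
  have hM0 : 0 ≤ M := le_trans (norm_nonneg _) (hMi ⟨0, hn⟩)
  -- symmetry facts
  have hRsym : ∀ x y : H, ⟪R x, y⟫ = ⟪x, R y⟫ := fun x y => hRsa.isSymmetric x y
  have hAsym : ∀ i, ∀ x y : H, ⟪A i x, y⟫ = ⟪x, A i y⟫ := fun i x y => (hAsa i).isSymmetric x y
  have hsqBsym : ∀ i, ∀ x y : H, ⟪sqB i x, y⟫ = ⟪x, sqB i y⟫ :=
    fun i x y => (hsqBsa i).isSymmetric x y
  have hApos : ∀ i, ∀ x : H, 0 ≤ ⟪A i x, x⟫ := by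
    intro i x
    obtain ⟨c, hc, h⟩ := hApd i
    have := h x
    nlinarith [norm_nonneg x, sq_nonneg ‖x‖]
  set C : H →L[ℝ] H := ∑ i, B i with hC
  set S : H →L[ℝ] H := ∑ i, (sqB i).comp ((A i).comp (sqB i)) with hS
  set T : H →L[ℝ] H := R.comp (C.comp R) with hT
  have hCsym : ∀ x y : H, ⟪C x, y⟫ = ⟪x, C y⟫ := by
    intro x y
    simp only [hC, ContinuousLinearMap.sum_apply, sum_inner, inner_sum]
    exact Finset.sum_congr rfl fun i _ => (hBsa i).isSymmetric x y
  have hTapp : ∀ x : H, T x = R (C (R x)) := fun x => rfl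
  have hTsym : ∀ x y : H, ⟪T x, y⟫ = ⟪x, T y⟫ := by
    intro x y
    rw [hTapp, hTapp, hRsym, hCsym, ← hRsym]
  have hTpos : ∀ x : H, 0 ≤ ⟪T x, x⟫ := by
    intro x
    rw [hTapp, hRsym]
    simp only [hC, ContinuousLinearMap.sum_apply, sum_inner]
    exact Finset.sum_nonneg fun i _ => hBpsd i (R x)
  have hRSR : ∀ x : H, R (S (R x)) = x := by
    intro x
    have := ContinuousLinearMap.ext_iff.mp hR x
    simpa [hS] using this
  have hTb : ∀ x : H, ⟪T x, x⟫ ≤ M * ‖x‖ ^ 2 := by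
    intro x
    set u := R x with hu
    have step1 : ∀ i, ⟪B i u, u⟫ ≤ M * ⟪A i (sqB i u), sqB i u⟫ := by
      intro i
      have e1 : ⟪B i u, u⟫ = ‖sqB i u‖ ^ 2 := by
        rw [← hsqB i]
        have : (sqB i).comp (sqB i) u = sqB i (sqB i u) := rfl
        rw [this, hsqBsym i, real_inner_self_eq_norm_sq]
      have e2 : ‖sqB i u‖ ^ 2 ≤ ‖Ainv i‖ * ⟪A i (sqB i u), sqB i u⟫ :=
        inv_bound (A i) (Ainv i) (hAsym i) (hApos i) (hAinv i).2 (sqB i u)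
      have e3 : ‖Ainv i‖ * ⟪A i (sqB i u), sqB i u⟫ ≤ M * ⟪A i (sqB i u), sqB i u⟫ :=
        mul_le_mul_of_nonneg_right (hMi i) (hApos i _)
      linarith [e1 ▸ e2]
    have step2 : ⟪C u, u⟫ ≤ M * ⟪S u, u⟫ := by
      simp only [hC, hS, ContinuousLinearMap.sum_apply, sum_inner, Finset.mul_sum]
      refine Finset.sum_le_sum fun i _ => ?_
      have : ((sqB i).comp ((A i).comp (sqB i))) u = sqB i (A i (sqB i u)) := rfl
      rw [this, hsqBsym i]
      exact step1 i
    have step3 : ⟪S u, u⟫ = ‖x‖ ^ 2 := by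
      rw [hu, ← hRsym (S (R x)) x, hRSR, real_inner_self_eq_norm_sq]
    calc ⟪T x, x⟫ = ⟪C u, u⟫ := by rw [hTapp, hRsym]
    _ ≤ M * ⟪S u, u⟫ := step2
    _ = M * ‖x‖ ^ 2 := by rw [step3]
  exact norm_le_of_inner T M hTsym hTpos hM0 hTb
end

section
/- For any sequence of Hilbert–Schmidt operators B_0, …, B_{T−1} on a finite-dimensional Hilbert space, any λ > 0, and any α ∈ (0,1], defining Σ_t = λI + ∑_{τ<t} B_τ† B_τ, it holds that ∑_{t=0}^{T−1} min{‖B_t Σ_t^{−1/2}‖^{2α}, 1} ≤ 2 T^{1−α} [1 + log(det(Σ_T)/det(Σ_0))]. -/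
open scoped RealInnerProductSpace
open ContinuousLinearMap


-- min x 1 ≤ 2 log(1+x) for x ≥ 0
theorem aux_min_le_log {x : ℝ} (hx : 0 ≤ x) : min x 1 ≤ 2 * Real.log (1 + x) := by
  rcases le_total x 1 with h | h
  · rw [min_eq_left h]
    have h1 : Real.exp (x/2) ≤ 1 + x := by
      have h2 : 1 - x/2 ≤ Real.exp (-(x/2)) := by
        have := Real.add_one_le_exp (-(x/2)); linarith
      have h3 : (0:ℝ) < 1 - x/2 := by linarith
      have h4 : Real.exp (x/2) * Real.exp (-(x/2)) = 1 := by
        rw [← Real.exp_add]; simp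
      nlinarith [Real.exp_pos (x/2), Real.exp_pos (-(x/2))]
    have := Real.log_le_log (Real.exp_pos _) h1
    rw [Real.log_exp] at this
    linarith
  · rw [min_eq_right h]
    have h2 : Real.log 2 ≤ Real.log (1+x) := Real.log_le_log (by norm_num) (by linarith)
    have := Real.log_two_gt_d9
    linarith

-- y^α ≤ 1 + y
theorem aux_rpow_le {y α : ℝ} (hy : 0 ≤ y) (hα0 : 0 < α) (hα1 : α ≤ 1) :
    y ^ α ≤ 1 + y := by
  rcases le_total y 1 with h | h
  · have := Real.rpow_le_one hy h hα0.le; linarith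
  · have : y ^ α ≤ y ^ (1:ℝ) := Real.rpow_le_rpow_of_exponent_le h hα1
    rw [Real.rpow_one] at this; linarith

-- min (y^α) 1 = (min y 1)^α
theorem aux_min_rpow {y α : ℝ} (hy : 0 ≤ y) (hα0 : 0 < α) :
    min (y ^ α) 1 = (min y 1) ^ α := by
  rcases le_total y 1 with h | h
  · rw [min_eq_left h, min_eq_left (Real.rpow_le_one hy h hα0.le)]
  · rw [min_eq_right h, min_eq_right (Real.one_le_rpow h hα0.le), Real.one_rpow]

-- 1 + sum ≤ prod (1 + f)
theorem aux_prod {ι : Type*} (s : Finset ι) (f : ι → ℝ) (hf : ∀ i ∈ s, 0 ≤ f i) :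
    1 + ∑ i ∈ s, f i ≤ ∏ i ∈ s, (1 + f i) := by
  induction s using Finset.cons_induction with
  | empty => simp
  | cons a s ha ih =>
    rw [Finset.sum_cons, Finset.prod_cons]
    have h1 := ih (fun i hi => hf i (Finset.mem_cons_of_mem hi))
    have h2 : 0 ≤ f a := hf a (Finset.mem_cons_self a s)
    have h3 : 0 ≤ ∑ i ∈ s, f i := Finset.sum_nonneg fun i hi => hf i (Finset.mem_cons_of_mem hi)
    nlinarith

-- power mean: ∑ w^α ≤ T^(1-α) (∑ w)^α
theorem aux_pm {T : ℕ} (hT : 0 < T) {α : ℝ} (hα0 : 0 < α) (hα1 : α ≤ 1)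
    (w : ℕ → ℝ) (hw : ∀ i, 0 ≤ w i) :
    ∑ t ∈ Finset.range T, (w t) ^ α ≤ (T:ℝ) ^ (1-α) * (∑ t ∈ Finset.range T, w t) ^ α := by
  have hTpos : (0:ℝ) < T := Nat.cast_pos.mpr hT
  have key := Real.arith_mean_le_rpow_mean (Finset.range T) (fun _ => (T:ℝ)⁻¹)
    (fun t => (w t) ^ α) (fun _ _ => by positivity)
    (by simp [Finset.card_range]; field_simp) (fun t _ => Real.rpow_nonneg (hw t) α)
    (p := 1/α) (by rw [le_div_iff₀ hα0]; linarith)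
  have h1 : ∀ t ∈ Finset.range T, (T:ℝ)⁻¹ * ((w t ^ α) ^ (1/α)) = (T:ℝ)⁻¹ * w t := by
    intro t _
    rw [← Real.rpow_mul (hw t), mul_one_div_cancel hα0.ne', Real.rpow_one]
  rw [Finset.sum_congr rfl h1, one_div_one_div, ← Finset.mul_sum, ← Finset.mul_sum,
    Real.mul_rpow (by positivity) (Finset.sum_nonneg fun t _ => hw t),
    Real.inv_rpow hTpos.le] at key
  have hTα : (0:ℝ) < (T:ℝ)^α := Real.rpow_pos_of_pos hTpos α
  have h2 := mul_le_mul_of_nonneg_left key hTpos.le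
  rw [← mul_assoc, mul_inv_cancel₀ hTpos.ne', one_mul] at h2
  have h3 : (T:ℝ) * (((T:ℝ)^α)⁻¹ * (∑ t ∈ Finset.range T, w t) ^ α)
      = (T:ℝ)^(1-α) * (∑ t ∈ Finset.range T, w t) ^ α := by
    rw [Real.rpow_sub hTpos, Real.rpow_one]
    field_simp
  linarith [h3 ▸ h2]

open ContinuousLinearMap in
theorem aux_det {d : ℕ} (C : EuclideanSpace ℝ (Fin d) →L[ℝ] EuclideanSpace ℝ (Fin d)) :
    1 + ‖C‖^2 ≤ LinearMap.det
      (((1 + (ContinuousLinearMap.adjoint C).comp C :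
        EuclideanSpace ℝ (Fin d) →L[ℝ] EuclideanSpace ℝ (Fin d))) :
        EuclideanSpace ℝ (Fin d) →ₗ[ℝ] EuclideanSpace ℝ (Fin d)) := by
  set E := EuclideanSpace ℝ (Fin d)
  set M : E →L[ℝ] E := (ContinuousLinearMap.adjoint C).comp C with hM
  have hsa : IsSelfAdjoint M := by
    rw [IsSelfAdjoint, star_eq_adjoint, hM, adjoint_comp, adjoint_adjoint]
  have hsym : (M : E →ₗ[ℝ] E).IsSymmetric := hsa.isSymmetric
  have hd : Module.finrank ℝ E = d := finrank_euclideanSpace_fin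
  set b := hsym.eigenvectorBasis hd with hb
  set μ := hsym.eigenvalues hd with hμ
  have happ : ∀ i, M (b i) = μ i • b i := fun i => hsym.apply_eigenvectorBasis hd i
  have hMx : ∀ x : E, ⟪M x, x⟫ = ‖C x‖^2 := by
    intro x
    rw [hM, ContinuousLinearMap.comp_apply, ContinuousLinearMap.adjoint_inner_left,
      real_inner_self_eq_norm_sq]
  have hsymc : ∀ x y : E, ⟪M x, y⟫ = ⟪x, M y⟫ := fun x y => hsym x y
  have hμ0 : ∀ i, 0 ≤ μ i := by
    intro i
    have h1 : ⟪M (b i), b i⟫ = μ i := by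
      rw [happ i, real_inner_smul_left, real_inner_self_eq_norm_sq, b.orthonormal.1 i]
      simp
    rw [← h1, hMx]
    positivity
  -- determinant equals product of (1 + μ i)
  have hdet : LinearMap.det ((1 + M : E →L[ℝ] E) : E →ₗ[ℝ] E) = ∏ i, (1 + μ i) := by
    rw [← LinearMap.det_toMatrix b.toBasis]
    have : LinearMap.toMatrix b.toBasis b.toBasis ((1 + M : E →L[ℝ] E) : E →ₗ[ℝ] E)
        = Matrix.diagonal (fun i => 1 + μ i) := by
      ext i j
      rw [LinearMap.toMatrix_apply]
      have : ((1 + M : E →L[ℝ] E) : E →ₗ[ℝ] E) (b.toBasis j) = (1 + μ j) • b j := by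
        simp [happ j, add_smul]
      rw [this, map_smul]
      simp only [← OrthonormalBasis.coe_toBasis, Module.Basis.repr_self, Finsupp.smul_apply,
        Finsupp.single_apply, Matrix.diagonal]
      by_cases h : i = j <;> simp [h, eq_comm]
    rw [this, Matrix.det_diagonal]
  -- operator norm bound
  have hnorm : ‖C‖^2 ≤ ∑ i, μ i := by
    have hsum0 : (0:ℝ) ≤ ∑ i, μ i := Finset.sum_nonneg fun i _ => hμ0 i
    have hbd : ∀ x : E, ‖C x‖^2 ≤ (∑ i, μ i) * ‖x‖^2 := by
      intro x
      have h2 : ⟪M x, x⟫ = ∑ i, μ i * ⟪x, b i⟫^2 := by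
        rw [← b.sum_inner_mul_inner (M x) x]
        congr 1; ext i
        rw [hsymc x (b i), happ i, real_inner_smul_right, real_inner_comm (b i) x]
        ring
      rw [← hMx, h2]
      have h3 : ∀ i, μ i * ⟪x, b i⟫^2 ≤ μ i * ‖x‖^2 := by
        intro i
        apply mul_le_mul_of_nonneg_left _ (hμ0 i)
        have := abs_real_inner_le_norm x (b i)
        rw [b.orthonormal.1 i] at this
        nlinarith [abs_nonneg ⟪x, b i⟫, sq_abs ⟪x, b i⟫]
      calc ∑ i, μ i * ⟪x, b i⟫^2 ≤ ∑ i, μ i * ‖x‖^2 := Finset.sum_le_sum fun i _ => h3 i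
        _ = (∑ i, μ i) * ‖x‖^2 := by rw [← Finset.sum_mul]
    have hCle : ‖C‖ ≤ Real.sqrt (∑ i, μ i) := by
      apply ContinuousLinearMap.opNorm_le_bound _ (Real.sqrt_nonneg _)
      intro x
      have := hbd x
      have h4 : ‖C x‖ = Real.sqrt (‖C x‖^2) := (Real.sqrt_sq (norm_nonneg _)).symm
      rw [h4]
      calc Real.sqrt (‖C x‖^2) ≤ Real.sqrt ((∑ i, μ i) * ‖x‖^2) := Real.sqrt_le_sqrt this
        _ = Real.sqrt (∑ i, μ i) * ‖x‖ := by
            rw [Real.sqrt_mul hsum0, Real.sqrt_sq (norm_nonneg _)]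
    calc ‖C‖^2 ≤ Real.sqrt (∑ i, μ i)^2 := by
          exact pow_le_pow_left₀ (norm_nonneg _) hCle 2
      _ = ∑ i, μ i := Real.sq_sqrt hsum0
  calc 1 + ‖C‖^2 ≤ 1 + ∑ i, μ i := by linarith
    _ ≤ ∏ i, (1 + μ i) := aux_prod _ _ (fun i _ => hμ0 i)
    _ = _ := hdet.symm


-- step lemma: operator identity and determinant relation
theorem aux_key {d : ℕ} (A Rt S S' : EuclideanSpace ℝ (Fin d) →L[ℝ] EuclideanSpace ℝ (Fin d))
    (hRsa : IsSelfAdjoint Rt) (hR : Rt.comp (S.comp Rt) = 1)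
    (hS' : S' = S + (ContinuousLinearMap.adjoint A).comp A) :
    Rt.comp (S'.comp Rt) = 1 + (ContinuousLinearMap.adjoint (A.comp Rt)).comp (A.comp Rt) := by
  have hadj : ContinuousLinearMap.adjoint (A.comp Rt)
      = Rt.comp (ContinuousLinearMap.adjoint A) := by
    rw [adjoint_comp, hRsa.adjoint_eq]
  have hRx : ∀ x, Rt (S (Rt x)) = x := fun x => by
    have := DFunLike.congr_fun hR x
    simpa using this
  rw [hS', hadj]
  ext x
  simp [ContinuousLinearMap.comp_apply, ContinuousLinearMap.add_apply, hRx x, map_add]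

/-- log-determinant bound with Hölder exponent α. -/
theorem stmt4
    {d T : ℕ} (lam : ℝ) (hlam : 0 < lam) (α : ℝ) (hα : α ∈ Set.Ioc (0 : ℝ) 1)
    (B Sig R : ℕ → (EuclideanSpace ℝ (Fin d) →L[ℝ] EuclideanSpace ℝ (Fin d)))
    (hSig : ∀ t, Sig t =
      lam • 1 + ∑ τ ∈ Finset.range t, (ContinuousLinearMap.adjoint (B τ)).comp (B τ))
    -- R t is the inverse of the positive square root of Sig t
    (hRsa : ∀ t, IsSelfAdjoint (R t))
    (hRpsd : ∀ t, ∀ x : EuclideanSpace ℝ (Fin d), 0 ≤ ⟪R t x, x⟫)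
    (hR : ∀ t, (R t).comp ((Sig t).comp (R t)) = 1) :
    ∑ t ∈ Finset.range T, min (‖(B t).comp (R t)‖ ^ (2 * α)) 1 ≤
      2 * (T : ℝ) ^ (1 - α) *
        (1 + Real.log
          (LinearMap.det (Sig T : EuclideanSpace ℝ (Fin d) →ₗ[ℝ] EuclideanSpace ℝ (Fin d)) /
           LinearMap.det (Sig 0 : EuclideanSpace ℝ (Fin d) →ₗ[ℝ] EuclideanSpace ℝ (Fin d)))) := by
  obtain ⟨hα0, hα1⟩ := hα
  set E := EuclideanSpace ℝ (Fin d)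
  set C : ℕ → (E →L[ℝ] E) := fun t => (B t).comp (R t) with hCdef
  have dS : ℕ → ℝ := fun t => LinearMap.det ((Sig t : E →ₗ[ℝ] E))
  -- determinant identities
  have h1 : ∀ t, LinearMap.det ((Sig t : E →ₗ[ℝ] E)) *
      (LinearMap.det ((R t : E →ₗ[ℝ] E)))^2 = 1 := by
    intro t
    have h := congrArg (fun f : E →L[ℝ] E => LinearMap.det ((f : E →ₗ[ℝ] E))) (hR t)
    simp only [ContinuousLinearMap.toLinearMap_comp, LinearMap.det_comp,
      ContinuousLinearMap.one_def, ContinuousLinearMap.coe_id, LinearMap.det_id] at h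
    ring_nf at h ⊢
    linarith
  have hdSpos : ∀ t, 0 < LinearMap.det ((Sig t : E →ₗ[ℝ] E)) := by
    intro t
    nlinarith [h1 t, sq_nonneg (LinearMap.det ((R t : E →ₗ[ℝ] E))),
      sq_abs (LinearMap.det ((R t : E →ₗ[ℝ] E)))]
  have hstep : ∀ t, Sig (t+1) = Sig t + (ContinuousLinearMap.adjoint (B t)).comp (B t) := by
    intro t
    rw [hSig (t+1), hSig t, Finset.sum_range_succ, ← add_assoc]
  have h2 : ∀ t, LinearMap.det ((Sig (t+1) : E →ₗ[ℝ] E)) =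
      LinearMap.det (((1 + (ContinuousLinearMap.adjoint (C t)).comp (C t) : E →L[ℝ] E)) :
        E →ₗ[ℝ] E) * LinearMap.det ((Sig t : E →ₗ[ℝ] E)) := by
    intro t
    have hk := aux_key (B t) (R t) (Sig t) (Sig (t+1)) (hRsa t) (hR t) (hstep t)
    have h := congrArg (fun f : E →L[ℝ] E => LinearMap.det ((f : E →ₗ[ℝ] E))) hk
    simp only [ContinuousLinearMap.toLinearMap_comp, LinearMap.det_comp] at h
    have h1t := h1 t
    have h1t' := h1 (t+1)
    set a := LinearMap.det ((R t : E →ₗ[ℝ] E))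
    set s := LinearMap.det ((Sig t : E →ₗ[ℝ] E))
    set s' := LinearMap.det ((Sig (t+1) : E →ₗ[ℝ] E))
    set D := LinearMap.det (((1 + (ContinuousLinearMap.adjoint (C t)).comp (C t) : E →L[ℝ] E)) :
        E →ₗ[ℝ] E)
    -- h : a * (s' * a) = D,  h1t : s * a^2 = 1
    have hs : 0 < s := hdSpos t
    have ha2 : a^2 = s⁻¹ := by field_simp; linarith [h1t]
    have : s' * a^2 = D := by nlinarith [h]
    rw [ha2] at this
    field_simp at this
    linarith [this]
  -- per-step log inequality
  have h3 : ∀ t, min (‖C t‖^2) 1 ≤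
      2 * (Real.log (LinearMap.det ((Sig (t+1) : E →ₗ[ℝ] E)))
        - Real.log (LinearMap.det ((Sig t : E →ₗ[ℝ] E)))) := by
    intro t
    have hD := aux_det (C t)
    set D := LinearMap.det (((1 + (ContinuousLinearMap.adjoint (C t)).comp (C t) : E →L[ℝ] E)) :
        E →ₗ[ℝ] E)
    have hD1 : (0:ℝ) < 1 + ‖C t‖^2 := by positivity
    calc min (‖C t‖^2) 1 ≤ 2 * Real.log (1 + ‖C t‖^2) := aux_min_le_log (by positivity)
      _ ≤ 2 * Real.log D := by
          have := Real.log_le_log hD1 hD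
          linarith
      _ = _ := by
          rw [h2 t, Real.log_mul (by nlinarith) (hdSpos t).ne']
          ring
  set w : ℕ → ℝ := fun t => min (‖C t‖^2) 1 with hwdef
  have hw0 : ∀ t, 0 ≤ w t := fun t => le_min (by positivity) one_pos.le
  have htel : ∑ t ∈ Finset.range T,
      (Real.log (LinearMap.det ((Sig (t+1) : E →ₗ[ℝ] E)))
        - Real.log (LinearMap.det ((Sig t : E →ₗ[ℝ] E))))
      = Real.log (LinearMap.det ((Sig T : E →ₗ[ℝ] E)))
        - Real.log (LinearMap.det ((Sig 0 : E →ₗ[ℝ] E))) :=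
    Finset.sum_range_sub (fun t => Real.log (LinearMap.det ((Sig t : E →ₗ[ℝ] E)))) T
  have hLdef : Real.log (LinearMap.det ((Sig T : E →ₗ[ℝ] E)) /
        LinearMap.det ((Sig 0 : E →ₗ[ℝ] E)))
      = Real.log (LinearMap.det ((Sig T : E →ₗ[ℝ] E)))
        - Real.log (LinearMap.det ((Sig 0 : E →ₗ[ℝ] E))) :=
    Real.log_div (hdSpos T).ne' (hdSpos 0).ne'
  have hsumw : ∑ t ∈ Finset.range T, w t ≤ 2 * Real.log (LinearMap.det ((Sig T : E →ₗ[ℝ] E)) /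
        LinearMap.det ((Sig 0 : E →ₗ[ℝ] E))) := by
    calc ∑ t ∈ Finset.range T, w t
        ≤ ∑ t ∈ Finset.range T, 2 * (Real.log (LinearMap.det ((Sig (t+1) : E →ₗ[ℝ] E)))
            - Real.log (LinearMap.det ((Sig t : E →ₗ[ℝ] E)))) :=
          Finset.sum_le_sum fun t _ => h3 t
      _ = _ := by rw [← Finset.mul_sum, htel, hLdef]
  have hL0 : 0 ≤ Real.log (LinearMap.det ((Sig T : E →ₗ[ℝ] E)) /
        LinearMap.det ((Sig 0 : E →ₗ[ℝ] E))) := by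
    rw [hLdef, ← htel]
    apply Finset.sum_nonneg
    intro t _
    have := h3 t
    have := hw0 t
    simp only [hwdef] at this
    linarith [h3 t, hw0 t]
  have hterm : ∀ t, min (‖C t‖ ^ (2*α)) 1 = (w t)^α := by
    intro t
    have : ‖C t‖ ^ (2*α) = (‖C t‖^2 : ℝ) ^ α := by
      rw [show (2*α : ℝ) = (2:ℕ) * α by norm_num, Real.rpow_mul (norm_nonneg _),
        Real.rpow_natCast]
    rw [this, aux_min_rpow (by positivity) hα0]
  rcases Nat.eq_zero_or_pos T with hT | hT
  · subst hT
    simp only [Finset.range_zero, Finset.sum_empty]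
    have : LinearMap.det ((Sig 0 : E →ₗ[ℝ] E)) / LinearMap.det ((Sig 0 : E →ₗ[ℝ] E)) = 1 :=
      div_self (hdSpos 0).ne'
    rw [this, Real.log_one]
    positivity
  · have hTr : (0:ℝ) ≤ (T:ℝ) ^ (1-α) := Real.rpow_nonneg (Nat.cast_nonneg T) _
    calc ∑ t ∈ Finset.range T, min (‖C t‖ ^ (2*α)) 1
        = ∑ t ∈ Finset.range T, (w t)^α := Finset.sum_congr rfl fun t _ => hterm t
      _ ≤ (T:ℝ) ^ (1-α) * (∑ t ∈ Finset.range T, w t) ^ α := aux_pm hT hα0 hα1 w hw0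
      _ ≤ (T:ℝ) ^ (1-α) * (1 + ∑ t ∈ Finset.range T, w t) := by
          apply mul_le_mul_of_nonneg_left _ hTr
          exact aux_rpow_le (Finset.sum_nonneg fun t _ => hw0 t) hα0 hα1
      _ ≤ (T:ℝ) ^ (1-α) * (1 + 2 * Real.log (LinearMap.det ((Sig T : E →ₗ[ℝ] E)) /
            LinearMap.det ((Sig 0 : E →ₗ[ℝ] E)))) := by
          apply mul_le_mul_of_nonneg_left _ hTr
          linarith
      _ ≤ 2 * (T:ℝ) ^ (1-α) * (1 + Real.log (LinearMap.det ((Sig T : E →ₗ[ℝ] E)) /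
            LinearMap.det ((Sig 0 : E →ₗ[ℝ] E)))) := by nlinarith
end

section
/- Let {P_Θ}_{Θ∈Π} be a family of orthogonal projections on a Hilbert space H', each P_Θ projecting onto ker(Ψ(Θ)†)^⊥ for bounded operators Ψ(Θ)† : H' → H, and let P be the orthogonal projection onto the closure of the sum of the subspaces ker(Ψ(Θ)†)^⊥ over Θ ∈ Π. Suppose M₀: H → H' is a (possibly nonlinear) map such that for every Θ, P_Θ ∘ M₀ is linear. Then P ∘ M₀ is linear. -/
/-- if each projected map P_Θ ∘ M₀ is linear, then P ∘ M₀ is linear,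
where P_Θ projects onto ker(Ψ(Θ)†)^⊥ and P onto the closure of their sum. -/
theorem stmt18
    {H H' : Type*} [NormedAddCommGroup H] [InnerProductSpace ℝ H] [CompleteSpace H]
    [NormedAddCommGroup H'] [InnerProductSpace ℝ H'] [CompleteSpace H']
    {P' : Type*} (Ψd : P' → (H' →L[ℝ] H)) (M0 : H → H')
    (PΘ : P' → (H' →L[ℝ] H')) (Pr : H' →L[ℝ] H')
    -- PΘ Θ is the orthogonal projection onto ker(Ψd Θ)^⊥
    (hPΘ : ∀ (Θ : P') (ψ : H'), PΘ Θ ψ ∈ (LinearMap.ker (Ψd Θ : H' →ₗ[ℝ] H))ᗮ ∧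
      ψ - PΘ Θ ψ ∈ ((LinearMap.ker (Ψd Θ : H' →ₗ[ℝ] H))ᗮ)ᗮ)
    -- Pr is the orthogonal projection onto the closure of the sum of the ker(Ψd Θ)^⊥
    (hPr : ∀ ψ : H', Pr ψ ∈ (⨆ Θ : P', (LinearMap.ker (Ψd Θ : H' →ₗ[ℝ] H))ᗮ).topologicalClosure ∧
      ψ - Pr ψ ∈ ((⨆ Θ : P', (LinearMap.ker (Ψd Θ : H' →ₗ[ℝ] H))ᗮ).topologicalClosure)ᗮ)
    -- each P_Θ ∘ M₀ is linear
    (hlin : ∀ Θ : P', IsLinearMap ℝ (fun φ : H => PΘ Θ (M0 φ))) :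
    IsLinearMap ℝ (fun φ : H => Pr (M0 φ)) := by
  set S := (⨆ Θ : P', (LinearMap.ker (Ψd Θ : H' →ₗ[ℝ] H))ᗮ).topologicalClosure with hS
  -- PΘ vanishes on ((ker)ᗮ)ᗮ
  have hP0 : ∀ (Θ : P') (x : H'), x ∈ ((LinearMap.ker (Ψd Θ : H' →ₗ[ℝ] H))ᗮ)ᗮ → PΘ Θ x = 0 := by
    intro Θ x hx
    have h1 := (hPΘ Θ x).1
    have h2 := (hPΘ Θ x).2
    have hmem : PΘ Θ x ∈ ((LinearMap.ker (Ψd Θ : H' →ₗ[ℝ] H))ᗮ)ᗮ := by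
      have : PΘ Θ x = x - (x - PΘ Θ x) := by abel
      rw [this]
      exact Submodule.sub_mem _ hx h2
    have := (Submodule.mem_orthogonal _ _).1 hmem _ h1
    rwa [inner_self_eq_zero] at this
  -- Sᗮ ≤ ((ker)ᗮ)ᗮ for every Θ
  have hSle : ∀ Θ : P', Sᗮ ≤ ((LinearMap.ker (Ψd Θ : H' →ₗ[ℝ] H))ᗮ)ᗮ := by
    intro Θ
    apply Submodule.orthogonal_le
    exact le_trans (le_iSup (fun Θ : P' => (LinearMap.ker (Ψd Θ : H' →ₗ[ℝ] H))ᗮ) Θ) (Submodule.le_topologicalClosure _)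
  -- PΘ ∘ Pr = PΘ
  have hcomp : ∀ (Θ : P') (ψ : H'), PΘ Θ (Pr ψ) = PΘ Θ ψ := by
    intro Θ ψ
    have h := hP0 Θ (ψ - Pr ψ) (hSle Θ (hPr ψ).2)
    rw [map_sub] at h
    exact (sub_eq_zero.mp h).symm
  -- key: if x ∈ S and all PΘ x = 0 then x = 0
  have hzero : ∀ x : H', x ∈ S → (∀ Θ : P', PΘ Θ x = 0) → x = 0 := by
    intro x hxS hx0
    have hxperp : x ∈ Sᗮ := by
      have h1 : x ∈ ⨅ Θ : P', ((LinearMap.ker (Ψd Θ : H' →ₗ[ℝ] H))ᗮ)ᗮ := by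
        rw [Submodule.mem_iInf]
        intro Θ
        have := (hPΘ Θ x).2
        rwa [hx0 Θ, sub_zero] at this
      rw [Submodule.iInf_orthogonal] at h1
      have h2 : (⨆ Θ : P', (LinearMap.ker (Ψd Θ : H' →ₗ[ℝ] H))ᗮ)ᗮ ≤ Sᗮ := by
        rw [hS, ← Submodule.orthogonal_orthogonal_eq_closure]
        exact Submodule.le_orthogonal_orthogonal _
      exact h2 h1
    have := (Submodule.mem_orthogonal _ _).1 hxperp _ hxS
    rwa [inner_self_eq_zero] at this
  constructor
  · intro φ₁ φ₂
    have hx : Pr (M0 (φ₁ + φ₂)) - (Pr (M0 φ₁) + Pr (M0 φ₂)) = 0 := by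
      apply hzero
      · exact Submodule.sub_mem _ (hPr _).1 (Submodule.add_mem _ (hPr _).1 (hPr _).1)
      · intro Θ
        rw [map_sub, map_add, hcomp, hcomp, hcomp, (hlin Θ).map_add, sub_self]
    linear_combination (norm := abel) hx
  · intro c φ
    have hx : Pr (M0 (c • φ)) - c • Pr (M0 φ) = 0 := by
      apply hzero
      · exact Submodule.sub_mem _ (hPr _).1 (Submodule.smul_mem _ _ (hPr _).1)
      · intro Θ
        rw [map_sub, map_smul, hcomp, hcomp, (hlin Θ).map_smul, sub_self]
    linear_combination (norm := abel) hx
end
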